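/- arXiv:0903.5146 — 3 statements merged into one kernel-verified Lean document; each statement's English description precedes it below -/
import Mathlib

section
/- The directional derivative of p_{k+1} at x in direction y equals tr(B_k(x)·y); that is, (d/dt)|_{t=0} p_{k+1}(x + t y) = tr(B_k(x) y) for all n×n matrices x, y. -/
open Matrix BigOperators

/-- The signed coefficients of the characteristic polynomial:
`det (t•I - x) = t^n - p 1 x * t^(n-1) - ⋯ - p n x`. -/
noncomputable def charCoeff (n : ℕ) (k : ℕ) (x : Matrix (Fin n) (Fin n) ℂ) : ℂ :=
  -(x.charpoly.coeff (n - k))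

/-- `B n k x = x^k - p 1 x • x^(k-1) - ⋯ - p k x • I`. -/
noncomputable def gradB (n : ℕ) (k : ℕ) (x : Matrix (Fin n) (Fin n) ℂ) :
    Matrix (Fin n) (Fin n) ℂ :=
  x ^ k - ∑ i ∈ Finset.Icc 1 k, charCoeff n i x • x ^ (k - i)

section Aux
open Polynomial

variable {m : Type*} [DecidableEq m] [Fintype m] {R : Type*} [CommRing R]

lemma jacobi_coeff (A B : Matrix m m R) :
    (Matrix.det (A.map C + (X : R[X]) • B.map C)).coeff 1 = Matrix.trace (A.adjugate * B) := by
  have h1 : Matrix.det (A.map C + (X : R[X]) • B.map C)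
      = ∑ s : Finset m, (X : R[X]) ^ s.card * C (Matrix.det (s.piecewise B A)) := by
    have h0 := (Matrix.detRowAlternating :
        (m → R[X]) [⋀^m]→ₗ[R[X]] R[X]).toMultilinearMap.map_add_univ
        ((X : R[X]) • B.map C) (A.map C)
    rw [show A.map C + (X : R[X]) • B.map C = (X : R[X]) • B.map C + A.map C from add_comm _ _]
    refine (show Matrix.det ((X : R[X]) • B.map C + A.map C)
        = (Matrix.detRowAlternating :
          (m → R[X]) [⋀^m]→ₗ[R[X]] R[X]).toMultilinearMap
          (((X : R[X]) • B.map C) + (A.map C)) from rfl).trans (h0.trans ?_)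
    refine Finset.sum_congr rfl fun s _ => ?_
    have hg : s.piecewise ((X : R[X]) • B.map C) (A.map C)
        = s.piecewise (fun i => (X : R[X]) • ((s.piecewise (B.map C) (A.map C)) i))
            (s.piecewise (B.map C) (A.map C)) := by
      funext i j
      by_cases h : i ∈ s <;> simp [Finset.piecewise, h]
    rw [hg, (Matrix.detRowAlternating :
        (m → R[X]) [⋀^m]→ₗ[R[X]] R[X]).toMultilinearMap.map_piecewise_smul
        (fun _ => (X : R[X])) _ s]
    have hmap : s.piecewise (B.map C) (A.map C) = Matrix.map (s.piecewise B A) C := by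
      funext i j
      by_cases h : i ∈ s <;> (show _ = C (s.piecewise B A i j); simp [Finset.piecewise, h])
    rw [hmap, Finset.prod_const, smul_eq_mul]
    congr 1
    exact ((C : R →+* R[X]).map_det _).symm
  rw [h1, finset_sum_coeff]
  have h2 : ∀ s : Finset m, ((X : R[X]) ^ s.card * C (Matrix.det (s.piecewise B A))).coeff 1
      = if 1 = s.card then Matrix.det (s.piecewise B A) else 0 := by
    intro s
    rw [mul_comm, coeff_C_mul, coeff_X_pow, mul_ite, mul_one, mul_zero]
  simp_rw [h2]
  rw [← Finset.sum_filter]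
  have h3 : Finset.univ.filter (fun s : Finset m => 1 = s.card)
      = Finset.univ.powersetCard 1 := by
    ext s; simp [Finset.mem_powersetCard, eq_comm]
  rw [h3, Finset.powersetCard_one, Finset.sum_map]
  have h4 : ∀ i : m, Matrix.det (({i} : Finset m).piecewise B A)
      = Matrix.det (A.updateRow i (B i)) := by
    intro i
    congr 1
    funext i' j
    by_cases h : i' = i
    · subst h; simp [Finset.piecewise]
    · simp [Finset.piecewise, h, Matrix.updateRow_ne h]
  calc ∑ i : m, Matrix.det (({i} : Finset m).piecewise B A)
      = ∑ i : m, cramer Aᵀ (B i) i := by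
        simp_rw [h4, Matrix.cramer_transpose_apply]
    _ = ∑ i : m, ∑ j : m, adjugate A j i * B i j := by
        simp [Matrix.cramer_eq_adjugate_mulVec, Matrix.mulVec, dotProduct,
          ← Matrix.adjugate_transpose, Matrix.transpose_apply]
    _ = Matrix.trace (adjugate A * B) := by
        rw [Matrix.trace]
        simp only [Matrix.diag, Matrix.mul_apply]
        exact Finset.sum_comm


lemma gradB_zero (n : ℕ) (x : Matrix (Fin n) (Fin n) ℂ) : gradB n 0 x = 1 := by
  simp [gradB]

lemma gradB_succ (n k : ℕ) (x : Matrix (Fin n) (Fin n) ℂ) :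
    gradB n (k + 1) x = x * gradB n k x - charCoeff n (k + 1) x • 1 := by
  unfold gradB
  rw [Finset.sum_Icc_succ_top (by omega : 1 ≤ k + 1)]
  rw [mul_sub, Finset.mul_sum]
  have h1 : x * x ^ k = x ^ (k + 1) := (pow_succ' x k).symm
  have h2 : ∀ i ∈ Finset.Icc 1 k, x * (charCoeff n i x • x ^ (k - i))
      = charCoeff n i x • x ^ (k + 1 - i) := by
    intro i hi
    rw [Finset.mem_Icc] at hi
    rw [mul_smul_comm, ← pow_succ']
    congr 2
    omega
  rw [Finset.sum_congr rfl h2, h1]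
  simp only [Nat.sub_self, pow_zero]
  abel

lemma gradB_self (n : ℕ) (x : Matrix (Fin n) (Fin n) ℂ) : gradB n n x = 0 := by
  have hdeg : x.charpoly.natDegree = n := by
    rw [Matrix.charpoly_natDegree_eq_dim, Fintype.card_fin]
  have haev := x.aeval_self_charpoly
  rw [Polynomial.aeval_eq_sum_range, hdeg, Finset.sum_range_succ] at haev
  have hlead : x.charpoly.coeff n = 1 := by
    have := x.charpoly_monic
    rw [Polynomial.Monic, Polynomial.leadingCoeff, hdeg] at this
    exact this
  rw [hlead, one_smul] at haev
  have hsum : ∑ i ∈ Finset.Icc 1 n, charCoeff n i x • x ^ (n - i)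
      = -∑ j ∈ Finset.range n, x.charpoly.coeff j • x ^ j := by
    rw [← Finset.sum_neg_distrib]
    refine Finset.sum_nbij' (fun i => n - i) (fun j => n - j) ?_ ?_ ?_ ?_ ?_
    · intro i hi; simp only [Finset.mem_Icc] at hi; simp only [Finset.mem_range]; omega
    · intro j hj; simp only [Finset.mem_range] at hj; simp only [Finset.mem_Icc]; omega
    · intro i hi; simp only [Finset.mem_Icc] at hi; omega
    · intro j hj; simp only [Finset.mem_range] at hj; omega
    · intro i hi; simp [charCoeff]
  rw [gradB, hsum, sub_neg_eq_add]
  linear_combination (norm := module) haev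


noncomputable def Gmat (n : ℕ) (x : Matrix (Fin n) (Fin n) ℂ) :
    Matrix (Fin n) (Fin n) ℂ[X] :=
  ∑ k ∈ Finset.range n, (X : ℂ[X]) ^ (n - 1 - k) • (gradB n k x).map C

lemma charpoly_expand (n : ℕ) (x : Matrix (Fin n) (Fin n) ℂ) :
    x.charpoly = X ^ n
      - ∑ k ∈ Finset.range n, C (charCoeff n (k + 1) x) * (X : ℂ[X]) ^ (n - 1 - k) := by
  have hdeg : x.charpoly.natDegree = n := by
    rw [Matrix.charpoly_natDegree_eq_dim, Fintype.card_fin]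
  have h := x.charpoly_monic.as_sum
  rw [hdeg] at h
  rw [h, sub_eq_add_neg]
  congr 1
  rw [← Finset.sum_neg_distrib]
  refine Finset.sum_nbij' (fun i => n - 1 - i) (fun k => n - 1 - k) ?_ ?_ ?_ ?_ ?_
  · intro i hi; simp only [Finset.mem_range] at *; omega
  · intro k hk; simp only [Finset.mem_range] at *; omega
  · intro i hi; simp only [Finset.mem_range] at hi; omega
  · intro k hk; simp only [Finset.mem_range] at hk; omega
  · intro i hi
    simp only [Finset.mem_range] at hi
    have e1 : n - ((n - 1 - i) + 1) = i := by omega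
    have e2 : n - 1 - (n - 1 - i) = i := by omega
    simp only [charCoeff, e1, e2, map_neg, neg_mul, neg_neg]

lemma charmatrix_mul_Gmat (n : ℕ) (x : Matrix (Fin n) (Fin n) ℂ) :
    charmatrix x * Gmat n x = x.charpoly • (1 : Matrix (Fin n) (Fin n) ℂ[X]) := by
  have hms : ∀ (a : ℂ) (M : Matrix (Fin n) (Fin n) ℂ),
      (a • M).map C = C a • M.map C := by
    intro a M; ext i j; simp
  set f : ℕ → Matrix (Fin n) (Fin n) ℂ[X] :=
    fun k => (X : ℂ[X]) ^ (n - k) • (gradB n k x).map C with hf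
  have key : ∀ k ∈ Finset.range n,
      charmatrix x * ((X : ℂ[X]) ^ (n - 1 - k) • (gradB n k x).map C)
      = (f k - f (k + 1))
        - (C (charCoeff n (k + 1) x) * (X : ℂ[X]) ^ (n - 1 - k)) •
            (1 : Matrix (Fin n) (Fin n) ℂ[X]) := by
    intro k hk
    have hk' : k < n := Finset.mem_range.mp hk
    have hx : x * gradB n k x = gradB n (k + 1) x + charCoeff n (k + 1) x • 1 := by
      rw [gradB_succ]; abel
    have hcm : charmatrix x * (gradB n k x).map C
        = (X : ℂ[X]) • (gradB n k x).map C - ((x * gradB n k x).map C) := by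
      rw [charmatrix, sub_mul, scalar_apply, ← smul_eq_diagonal_mul,
        RingHom.mapMatrix_apply]
      congr 1
      exact (Matrix.map_mul).symm
    have e1 : (n - 1 - k) + 1 = n - k := by omega
    rw [Matrix.mul_smul, hcm, hx]
    rw [Matrix.map_add _ (fun a b => map_add C a b), hms, smul_sub, smul_add, smul_smul, smul_smul]
    rw [← pow_succ, e1]
    rw [Matrix.map_one C (map_zero C) (map_one C)]
    have e3 : n - (k + 1) = n - 1 - k := by omega
    rw [hf]
    dsimp only
    rw [e3, mul_comm ((X : ℂ[X]) ^ (n - 1 - k)) (C (charCoeff n (k + 1) x))]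
    abel
  rw [Gmat, Finset.mul_sum, Finset.sum_congr rfl key, Finset.sum_sub_distrib,
    Finset.sum_range_sub' f]
  rw [hf]
  dsimp only
  rw [gradB_zero, gradB_self, Nat.sub_zero]
  rw [Matrix.map_zero _ (map_zero C), Matrix.map_one C (map_zero C) (map_one C),
    smul_zero, sub_zero]
  rw [← Finset.sum_smul, ← sub_smul, ← charpoly_expand]

lemma adjugate_charmatrix_eq (n : ℕ) (x : Matrix (Fin n) (Fin n) ℂ) :
    adjugate (charmatrix x) = Gmat n x := by
  have hdet : (charmatrix x).det = x.charpoly := rfl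
  have h1 : charmatrix x * adjugate (charmatrix x) = x.charpoly • 1 := by
    rw [Matrix.mul_adjugate, hdet]
  have h2 : charmatrix x * adjugate (charmatrix x) = charmatrix x * Gmat n x := by
    rw [h1, charmatrix_mul_Gmat]
  have h3 : x.charpoly • adjugate (charmatrix x) = x.charpoly • Gmat n x := by
    have h4 := congrArg (fun M => adjugate (charmatrix x) * M) h2
    simp only [← Matrix.mul_assoc] at h4
    rw [Matrix.adjugate_mul, hdet, Matrix.smul_mul, Matrix.one_mul, Matrix.smul_mul,
      Matrix.one_mul] at h4
    exact h4
  have hne : x.charpoly ≠ 0 := x.charpoly_monic.ne_zero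
  refine Matrix.ext fun i j => ?_
  have h5 := congrFun (congrFun h3 i) j
  simp only [Matrix.smul_apply, smul_eq_mul] at h5
  exact mul_left_cancel₀ hne h5

lemma trace_coeff (n k : ℕ) (hk : k < n) (x y : Matrix (Fin n) (Fin n) ℂ) :
    (Matrix.trace (adjugate (charmatrix x) * y.map C)).coeff (n - 1 - k)
      = Matrix.trace (gradB n k x * y) := by
  have htr : ∀ M : Matrix (Fin n) (Fin n) ℂ,
      Matrix.trace (M.map C) = C (Matrix.trace M) := by
    intro M; simp [Matrix.trace, Matrix.diag, Matrix.map_apply, map_sum]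
  rw [adjugate_charmatrix_eq, Gmat, Finset.sum_mul]
  have hterm : ∀ k' : ℕ, ((X : ℂ[X]) ^ (n - 1 - k') • (gradB n k' x).map C) * y.map C
      = (X : ℂ[X]) ^ (n - 1 - k') • ((gradB n k' x * y).map C) := by
    intro k'
    rw [Matrix.smul_mul, ← Matrix.map_mul]
  simp only [hterm]
  rw [Matrix.trace_sum]
  simp only [Matrix.trace_smul, htr, smul_eq_mul]
  rw [finset_sum_coeff]
  rw [Finset.sum_eq_single k]
  · rw [mul_comm, coeff_C_mul, coeff_X_pow, if_pos rfl, mul_one]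
  · intro k' hk' hne
    rw [Finset.mem_range] at hk'
    rw [mul_comm, coeff_C_mul, coeff_X_pow, if_neg (by omega), mul_zero]
  · intro h
    exact absurd (Finset.mem_range.mpr hk) h


end Aux

open Polynomial in
/--  is the gradient of  with respect to the trace form:
. -/
theorem stmt2 (n : ℕ) (k : ℕ) (hk : k ≤ n - 1) (x y : Matrix (Fin n) (Fin n) ℂ) :
    deriv (fun t : ℂ => charCoeff n (k + 1) (x + t • y)) 0 = (gradB n k x * y).trace := by
  rcases Nat.eq_zero_or_pos n with hn | hn
  · subst hn
    have h1 : (fun t : ℂ => charCoeff 0 (k + 1) (x + t • y)) = fun _ => (-1 : ℂ) := by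
      funext t
      simp [charCoeff, Matrix.charpoly, Matrix.det_isEmpty]
    rw [h1, deriv_const]
    simp [Matrix.trace]
  · have hk' : k < n := by omega
    set j₀ := n - 1 - k with hj₀
    set D : (ℂ[X])[X] := Matrix.det ((charmatrix x).map Polynomial.C
        + (X : (ℂ[X])[X]) • ((-(y.map Polynomial.C)).map Polynomial.C)) with hD
    have heval : ∀ s₀ : ℂ, (x + s₀ • y).charpoly = D.eval (Polynomial.C s₀) := by
      intro s₀
      have h1 : D.eval (Polynomial.C s₀)
          = (Polynomial.evalRingHom (Polynomial.C s₀ : ℂ[X])) D := rfl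
      rw [h1, hD, RingHom.map_det]
      unfold Matrix.charpoly
      refine congrArg Matrix.det (Matrix.ext fun i j => ?_)
      simp only [charmatrix, Matrix.sub_apply, Matrix.scalar_apply, RingHom.mapMatrix_apply,
        Matrix.map_apply, Matrix.add_apply, Matrix.smul_apply, Matrix.neg_apply, smul_eq_mul,
        coe_evalRingHom, eval_add, eval_mul, eval_C, eval_X, Matrix.diagonal_apply,
        Matrix.add_apply, Pi.smul_apply]
      rw [map_add, _root_.map_mul]
      ring
    set q : ℂ[X] := ∑ m ∈ Finset.range (D.natDegree + 1),
        Polynomial.C ((D.coeff m).coeff j₀) * X ^ m with hq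
    have hqeval : ∀ t : ℂ, (D.eval (Polynomial.C t)).coeff j₀ = q.eval t := by
      intro t
      rw [Polynomial.eval_eq_sum_range, finset_sum_coeff, hq, Polynomial.eval_finset_sum]
      refine Finset.sum_congr rfl fun m _ => ?_
      rw [← map_pow, Polynomial.coeff_mul_C, Polynomial.eval_mul, Polynomial.eval_C,
        Polynomial.eval_pow, Polynomial.eval_X]
    have hfun : (fun t : ℂ => charCoeff n (k + 1) (x + t • y)) = fun t => -(q.eval t) := by
      funext t
      rw [charCoeff, heval]
      have : n - (k + 1) = j₀ := by omega
      rw [this, hqeval]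
    rw [hfun, deriv.fun_neg, Polynomial.deriv]
    have hd0 : (Polynomial.derivative q).eval 0 = q.coeff 1 := by
      rw [← Polynomial.coeff_zero_eq_eval_zero, Polynomial.coeff_derivative]
      simp
    have hq1 : q.coeff 1 = (D.coeff 1).coeff j₀ := by
      rw [hq, finset_sum_coeff]
      simp_rw [Polynomial.coeff_C_mul, Polynomial.coeff_X_pow, mul_ite, mul_one, mul_zero]
      rw [Finset.sum_ite_eq]
      split_ifs with h
      · rfl
      · rw [Finset.mem_range, not_lt] at h
        rw [Polynomial.coeff_eq_zero_of_natDegree_lt (show D.natDegree < 1 by omega),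
          Polynomial.coeff_zero]
    have hjac : D.coeff 1 = -(Matrix.trace (adjugate (charmatrix x) * y.map Polynomial.C)) := by
      rw [hD, jacobi_coeff, Matrix.mul_neg, Matrix.trace_neg]
    rw [hd0, hq1, hjac, Polynomial.coeff_neg, neg_neg, trace_coeff n k hk' x y]
end

section
/- The map M : gl(n,ℂ) × ℂ^n × (ℂ^n)* → gl(n+1,ℂ) sending (x, u, v*) to the block matrix [[x, u],[v*, 0]] is an injective Lie algebra homomorphism from the semidirect product Lie algebra b = gl(n) ⋉ (V ⊕ V*) into the Z_2-contraction Lie algebra k = g_0 ⋉ g_1, whose image is an ideal of codimension 1 in k. -/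
open Matrix BigOperators

/-- The underlying space of `b = gl(n) ⋉ (V ⊕ V*)`. -/
abbrev LieB (n : ℕ) :=
  Matrix (Fin n) (Fin n) ℂ × Matrix (Fin n) (Fin 1) ℂ × Matrix (Fin 1) (Fin n) ℂ

/-- The bracket of the semidirect product `b = gl(n) ⋉ (V ⊕ V*)`. -/
noncomputable def bracketB (n : ℕ) (p q : LieB n) : LieB n :=
  (p.1 * q.1 - q.1 * p.1, p.1 * q.2.1 - q.1 * p.2.1, -(q.2.2 * p.1) + p.2.2 * q.1)

/-- Projection of a matrix of size `n+1` onto its block-diagonal part `g₀`. -/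
def proj0 (n : ℕ) (Z : Matrix (Fin n ⊕ Fin 1) (Fin n ⊕ Fin 1) ℂ) :
    Matrix (Fin n ⊕ Fin 1) (Fin n ⊕ Fin 1) ℂ :=
  Matrix.of fun i j => if i.isLeft = j.isLeft then Z i j else 0

/-- Projection onto the block-off-diagonal part `g₁`. -/
noncomputable def proj1 (n : ℕ) (Z : Matrix (Fin n ⊕ Fin 1) (Fin n ⊕ Fin 1) ℂ) :
    Matrix (Fin n ⊕ Fin 1) (Fin n ⊕ Fin 1) ℂ :=
  Z - proj0 n Z

/-- The bracket of the `ℤ₂`-contraction `k = g₀ ⋉ g₁` of `gl(n+1)`: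
the `g₁`-`g₁` part of the usual bracket is set to zero. -/
noncomputable def bracketK (n : ℕ) (Z W : Matrix (Fin n ⊕ Fin 1) (Fin n ⊕ Fin 1) ℂ) :
    Matrix (Fin n ⊕ Fin 1) (Fin n ⊕ Fin 1) ℂ :=
  (proj0 n Z * proj0 n W - proj0 n W * proj0 n Z)
    + (proj0 n Z * proj1 n W - proj1 n W * proj0 n Z)
    + (proj1 n Z * proj0 n W - proj0 n W * proj1 n Z)

/-- The linear map `M : b → k`, `(x, u, v*) ↦ [[x, u], [v*, 0]]`. -/
noncomputable def Mlin (n : ℕ) : LieB n →ₗ[ℂ] Matrix (Fin n ⊕ Fin 1) (Fin n ⊕ Fin 1) ℂ where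
  toFun p := Matrix.fromBlocks p.1 p.2.1 p.2.2 0
  map_add' p q := by
    ext i j
    cases i <;> cases j <;>
      simp [Matrix.fromBlocks, Matrix.add_apply]
  map_smul' c p := by
    ext i j
    cases i <;> cases j <;>
      simp [Matrix.fromBlocks, Matrix.smul_apply]


section Aux
open Matrix

lemma proj0_fromBlocks (n : ℕ) (a : Matrix (Fin n) (Fin n) ℂ) (b : Matrix (Fin n) (Fin 1) ℂ)
    (c : Matrix (Fin 1) (Fin n) ℂ) (d : Matrix (Fin 1) (Fin 1) ℂ) :
    proj0 n (fromBlocks a b c d) = fromBlocks a 0 0 d := by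
  ext i j
  cases i <;> cases j <;> simp [proj0, fromBlocks]

lemma proj1_fromBlocks (n : ℕ) (a : Matrix (Fin n) (Fin n) ℂ) (b : Matrix (Fin n) (Fin 1) ℂ)
    (c : Matrix (Fin 1) (Fin n) ℂ) (d : Matrix (Fin 1) (Fin 1) ℂ) :
    proj1 n (fromBlocks a b c d) = fromBlocks 0 b c 0 := by
  rw [proj1, proj0_fromBlocks]
  ext i j
  cases i <;> cases j <;> simp [fromBlocks]

lemma bracketK_fromBlocks (n : ℕ) (a : Matrix (Fin n) (Fin n) ℂ) (b : Matrix (Fin n) (Fin 1) ℂ)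
    (c : Matrix (Fin 1) (Fin n) ℂ) (d : Matrix (Fin 1) (Fin 1) ℂ)
    (a' : Matrix (Fin n) (Fin n) ℂ) (b' : Matrix (Fin n) (Fin 1) ℂ)
    (c' : Matrix (Fin 1) (Fin n) ℂ) (d' : Matrix (Fin 1) (Fin 1) ℂ) :
    bracketK n (fromBlocks a b c d) (fromBlocks a' b' c' d') =
      fromBlocks (a * a' - a' * a) (a * b' - b' * d + (b * d' - a' * b))
        (d * c' - c' * a + (c * a' - d' * c)) (d * d' - d' * d) := by
  rw [bracketK, proj0_fromBlocks, proj0_fromBlocks, proj1_fromBlocks, proj1_fromBlocks]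
  simp only [fromBlocks_multiply, sub_eq_add_neg, fromBlocks_neg, fromBlocks_add,
    Matrix.mul_zero, Matrix.zero_mul, add_zero, zero_add, neg_zero]


lemma Mlin_apply (n : ℕ) (p : LieB n) :
    Mlin n p = fromBlocks p.1 p.2.1 p.2.2 0 := rfl

lemma mem_range_Mlin (n : ℕ) (Z : Matrix (Fin n ⊕ Fin 1) (Fin n ⊕ Fin 1) ℂ) :
    Z ∈ LinearMap.range (Mlin n) ↔ Z.toBlocks₂₂ = 0 := by
  constructor
  · rintro ⟨p, rfl⟩
    simp [Mlin_apply, toBlocks_fromBlocks₂₂]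
  · intro h
    refine ⟨(Z.toBlocks₁₁, Z.toBlocks₁₂, Z.toBlocks₂₁), ?_⟩
    rw [Mlin_apply, ← h, fromBlocks_toBlocks]


/-- The bottom-right entry as a linear functional. -/
noncomputable def cornerFun (n : ℕ) :
    Matrix (Fin n ⊕ Fin 1) (Fin n ⊕ Fin 1) ℂ →ₗ[ℂ] ℂ where
  toFun Z := Z (Sum.inr 0) (Sum.inr 0)
  map_add' _ _ := rfl
  map_smul' _ _ := rfl

lemma range_Mlin_eq_ker (n : ℕ) :
    LinearMap.range (Mlin n) = LinearMap.ker (cornerFun n) := by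
  ext Z
  rw [mem_range_Mlin, LinearMap.mem_ker]
  constructor
  · intro h
    have := congrFun (congrFun h 0) 0
    exact (by simpa [Matrix.toBlocks₂₂] using this : Z (Sum.inr 0) (Sum.inr 0) = 0)
  · intro h
    ext i j
    fin_cases i; fin_cases j
    have h' : Z (Sum.inr 0) (Sum.inr 0) = 0 := h
    simpa [Matrix.toBlocks₂₂] using h'

end Aux

/-- `M` is an injective Lie algebra homomorphism from the semidirect product
`b = gl(n) ⋉ (V ⊕ V*)` to the `ℤ₂`-contraction `k`, whose image is an ideal of
codimension 1 in `k`. -/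
theorem stmt13 (n : ℕ) :
    Function.Injective (Mlin n) ∧
    (∀ p q : LieB n, Mlin n (bracketB n p q) = bracketK n (Mlin n p) (Mlin n q)) ∧
    (∀ Z : Matrix (Fin n ⊕ Fin 1) (Fin n ⊕ Fin 1) ℂ,
      ∀ W ∈ LinearMap.range (Mlin n),
        bracketK n Z W ∈ LinearMap.range (Mlin n) ∧
        bracketK n W Z ∈ LinearMap.range (Mlin n)) ∧
    Module.rank ℂ
      (Matrix (Fin n ⊕ Fin 1) (Fin n ⊕ Fin 1) ℂ ⧸ LinearMap.range (Mlin n)) = 1 := by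
  refine ⟨?_, ?_, ?_, ?_⟩
  · intro p q h
    have h11 := congrArg Matrix.toBlocks₁₁ h
    have h12 := congrArg Matrix.toBlocks₁₂ h
    have h21 := congrArg Matrix.toBlocks₂₁ h
    simp only [Mlin_apply, toBlocks_fromBlocks₁₁, toBlocks_fromBlocks₁₂,
      toBlocks_fromBlocks₂₁] at h11 h12 h21
    exact Prod.ext h11 (Prod.ext h12 h21)
  · intro p q
    rw [Mlin_apply, Mlin_apply, Mlin_apply, bracketK_fromBlocks, bracketB]
    simp [sub_eq_add_neg]
  · intro Z W hW
    obtain ⟨p, rfl⟩ := hW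
    constructor
    · rw [mem_range_Mlin, Mlin_apply, ← Z.fromBlocks_toBlocks, bracketK_fromBlocks]
      simp
    · rw [mem_range_Mlin, Mlin_apply, ← Z.fromBlocks_toBlocks, bracketK_fromBlocks]
      simp
  · have hs : Function.Surjective (cornerFun n) := by
      intro c
      exact ⟨Matrix.of fun _ _ => c, rfl⟩
    rw [range_Mlin_eq_ker]
    rw [((cornerFun n).quotKerEquivOfSurjective hs).rank_eq]
    exact Module.rank_self ℂ
end

section
/- For n = 2ℓ+1 odd, there is a polynomial covariant pf : so(n,ℂ) → ℂ^n (the 'vector pfaffian') such that for every antisymmetric y and every row vector w*, w*·pf(y) = Pf([[y, -ᵗw*],[w*, 0]]), the pfaffian of the (2ℓ+2)×(2ℓ+2) antisymmetric matrix; moreover pf(g y g^{-1}) = (det g)·g·pf(y) for all g ∈ O(n,ℂ). -/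
open Matrix BigOperators

/-- The Pfaffian of a `2m × 2m` matrix, defined by the standard formula
`Pf A = (1/(2^m m!)) ∑_σ sgn(σ) ∏ᵢ A_{σ(2i) σ(2i+1)}`. -/
noncomputable def pfaffian (m : ℕ) (A : Matrix (Fin (2 * m)) (Fin (2 * m)) ℂ) : ℂ :=
  (1 / ((2 : ℂ) ^ m * (Nat.factorial m : ℂ))) *
    ∑ σ : Equiv.Perm (Fin (2 * m)), (Equiv.Perm.sign σ : ℤ) *
      ∏ i : Fin m, A (σ ⟨2 * (i : ℕ), by have := i.2; omega⟩)
        (σ ⟨2 * (i : ℕ) + 1, by have := i.2; omega⟩)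

/-- The `(2ℓ+2) × (2ℓ+2)` antisymmetric matrix `[[y, -ᵗw*], [w*, 0]]`,
reindexed by `Fin (2(ℓ+1))`. -/
noncomputable def Yblock (l : ℕ) (y : Matrix (Fin (2 * l + 1)) (Fin (2 * l + 1)) ℂ)
    (wstar : Matrix (Fin 1) (Fin (2 * l + 1)) ℂ) :
    Matrix (Fin (2 * (l + 1))) (Fin (2 * (l + 1))) ℂ :=
  Matrix.reindex (finSumFinEquiv.trans (finCongr (by omega)))
    (finSumFinEquiv.trans (finCongr (by omega)))
    (Matrix.fromBlocks y (-(wstarᵀ)) wstar 0)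

open Finset

def pe (m : ℕ) (i : Fin m) : Fin (2*m) := ⟨2*i.val, by have := i.2; omega⟩
def qe (m : ℕ) (i : Fin m) : Fin (2*m) := ⟨2*i.val+1, by have := i.2; omega⟩

lemma prod_pair {m : ℕ} {M : Type*} [CommMonoid M] (h : Fin (2*m) → M) :
    ∏ x, h x = ∏ i : Fin m, (h (pe m i) * h (qe m i)) := by
  rw [← Equiv.prod_comp (finProdFinEquiv.trans (finCongr (mul_comm m 2))) h]
  rw [Fintype.prod_prod_type]
  refine Finset.prod_congr rfl fun i _ => ?_
  rw [Fin.prod_univ_two]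
  congr 1
  · congr 1; ext; simp [finProdFinEquiv_apply_val, pe]
  · congr 1; ext; simp [finProdFinEquiv_apply_val, qe]; omega

def pairFunEquiv (m : ℕ) : (Fin (2*m) → Fin (2*m)) ≃ (Fin m → Fin (2*m) × Fin (2*m)) where
  toFun f i := (f (pe m i), f (qe m i))
  invFun g x := if x.val % 2 = 0 then (g ⟨x.val/2, by have := x.2; omega⟩).1
    else (g ⟨x.val/2, by have := x.2; omega⟩).2
  left_inv f := by
    funext x
    by_cases hx : x.val % 2 = 0 <;> simp only [hx, if_pos, if_neg, ite_true, ite_false]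
    · congr 1; simp only [pe]; ext; simp; omega
    · congr 1; simp only [qe]; ext; simp; omega
  right_inv g := by
    funext i
    refine Prod.ext ?_ ?_ <;> simp only [pe, qe]
    · refine (if_pos (by omega)).trans ?_
      congr 2
      exact Fin.ext (show 2*(i:ℕ)/2 = i by omega)
    · refine (if_neg (by omega)).trans ?_
      congr 2
      exact Fin.ext (show (2*(i:ℕ)+1)/2 = i by omega)

lemma entry_expand {m : ℕ} (A B : Matrix (Fin (2*m)) (Fin (2*m)) ℂ) (a b : Fin (2*m)) :
    (B*A*Bᵀ) a b = ∑ z : Fin (2*m) × Fin (2*m), B a z.1 * A z.1 z.2 * B b z.2 := by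
  simp only [Matrix.mul_apply, Matrix.transpose_apply, Finset.sum_mul]
  rw [Fintype.sum_prod_type, Finset.sum_comm]

lemma pf_sum_conj (m : ℕ) (A B : Matrix (Fin (2*m)) (Fin (2*m)) ℂ) :
    ∑ σ : Equiv.Perm (Fin (2*m)), ((Equiv.Perm.sign σ : ℤ) : ℂ) *
      ∏ i : Fin m, (B*A*Bᵀ) (σ (pe m i)) (σ (qe m i))
    = B.det * ∑ σ : Equiv.Perm (Fin (2*m)), ((Equiv.Perm.sign σ : ℤ) : ℂ) *
      ∏ i : Fin m, A (σ (pe m i)) (σ (qe m i)) := by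
  have expand : ∀ σ : Equiv.Perm (Fin (2*m)),
      ∏ i : Fin m, (B*A*Bᵀ) (σ (pe m i)) (σ (qe m i))
      = ∑ f : Fin (2*m) → Fin (2*m),
          (∏ i : Fin m, A (f (pe m i)) (f (qe m i))) * ∏ x, B (σ x) (f x) := by
    intro σ
    simp only [entry_expand]
    rw [Finset.prod_univ_sum, Fintype.piFinset_univ,
      ← Equiv.sum_comp (pairFunEquiv m)]
    refine Finset.sum_congr rfl fun f _ => ?_
    simp only [pairFunEquiv, Equiv.coe_fn_mk]
    rw [prod_pair (fun x => B (σ x) (f x)), ← Finset.prod_mul_distrib]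
    refine Finset.prod_congr rfl fun i _ => ?_
    ring
  calc ∑ σ : Equiv.Perm (Fin (2*m)), ((Equiv.Perm.sign σ : ℤ) : ℂ) *
      ∏ i : Fin m, (B*A*Bᵀ) (σ (pe m i)) (σ (qe m i))
      = ∑ σ : Equiv.Perm (Fin (2*m)), ∑ f : Fin (2*m) → Fin (2*m),
          (∏ i : Fin m, A (f (pe m i)) (f (qe m i))) *
          (((Equiv.Perm.sign σ : ℤ) : ℂ) * ∏ x, B (σ x) (f x)) := by
        refine Finset.sum_congr rfl fun σ _ => ?_
        rw [expand σ, Finset.mul_sum]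
        refine Finset.sum_congr rfl fun f _ => ?_; ring
    _ = ∑ f : Fin (2*m) → Fin (2*m),
          (∏ i : Fin m, A (f (pe m i)) (f (qe m i))) * (B.submatrix id f).det := by
        rw [Finset.sum_comm]
        refine Finset.sum_congr rfl fun f _ => ?_
        rw [← Finset.mul_sum, Matrix.det_apply']
        rfl
    _ = ∑ f ∈ Finset.univ.filter Function.Bijective,
          (∏ i : Fin m, A (f (pe m i)) (f (qe m i))) * (B.submatrix id f).det := by
        refine (Finset.sum_subset (Finset.filter_subset _ _) fun f _ hf => ?_).symm
        have hnb : ¬ Function.Bijective f := by simpa using hf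
        have hni : ¬ Function.Injective f := fun hinj =>
          hnb (Finite.injective_iff_bijective.mp hinj)
        rw [Function.not_injective_iff] at hni
        obtain ⟨a, b, hab, hne⟩ := hni
        rw [Matrix.det_zero_of_column_eq hne
          (fun k => by simp [Matrix.submatrix_apply, hab]), mul_zero]
    _ = ∑ π : Equiv.Perm (Fin (2*m)),
          (∏ i : Fin m, A (π (pe m i)) (π (qe m i))) * (B.submatrix id π).det := by
        refine Finset.sum_bij (fun p h => Equiv.ofBijective p (Finset.mem_filter.1 h).2)
          (fun _ _ => Finset.mem_univ _) (fun _ _ _ _ h => by injection h)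
          (fun b _ => ⟨b, Finset.mem_filter.2 ⟨Finset.mem_univ _, b.bijective⟩,
            Equiv.coe_fn_injective rfl⟩) fun _ _ => rfl
    _ = B.det * ∑ σ : Equiv.Perm (Fin (2*m)), ((Equiv.Perm.sign σ : ℤ) : ℂ) *
      ∏ i : Fin m, A (σ (pe m i)) (σ (qe m i)) := by
        rw [Finset.mul_sum]
        refine Finset.sum_congr rfl fun π _ => ?_
        rw [Matrix.det_permute']
        ring

lemma pf_conj (m : ℕ) (A B : Matrix (Fin (2*m)) (Fin (2*m)) ℂ) :
    pfaffian m (B * A * Bᵀ) = B.det * pfaffian m A := by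
  unfold pfaffian
  push_cast
  have h := pf_sum_conj m A B
  unfold pe qe at h
  rw [h]
  ring

lemma fsf_symm_lt {N : ℕ} (x : Fin (N + 1)) (hx : x.val < N) :
    finSumFinEquiv.symm x = Sum.inl ⟨x.val, hx⟩ := by
  rw [Equiv.symm_apply_eq, finSumFinEquiv_apply_left]
  exact (Fin.ext rfl).symm

lemma fsf_symm_last {N : ℕ} (x : Fin (N + 1)) (hx : x.val = N) :
    finSumFinEquiv.symm x = Sum.inr 0 := by
  rw [Equiv.symm_apply_eq, finSumFinEquiv_apply_right]
  exact Fin.ext (by simp [hx])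

lemma Yblock_apply (l : ℕ) (y : Matrix (Fin (2 * l + 1)) (Fin (2 * l + 1)) ℂ)
    (w : Matrix (Fin 1) (Fin (2 * l + 1)) ℂ) (a b : Fin (2*(l+1))) :
    Yblock l y w a b = Matrix.fromBlocks y (-(wᵀ)) w 0
      (finSumFinEquiv.symm (Fin.cast (by omega) a))
      (finSumFinEquiv.symm (Fin.cast (by omega) b)) := rfl

section FB
variable {l : ℕ} {α : Type*} (A : Matrix (Fin (2*l+1)) (Fin (2*l+1)) α)
  (B : Matrix (Fin (2*l+1)) (Fin 1) α) (C : Matrix (Fin 1) (Fin (2*l+1)) α)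
  (D : Matrix (Fin 1) (Fin 1) α)

lemma fb_ll (x z : Fin (2*l+1+1)) (hx : x.val < 2*l+1) (hz : z.val < 2*l+1) :
    Matrix.fromBlocks A B C D (finSumFinEquiv.symm x) (finSumFinEquiv.symm z)
      = A ⟨x.val, hx⟩ ⟨z.val, hz⟩ := by
  rw [fsf_symm_lt x hx, fsf_symm_lt z hz]; rfl

lemma fb_lr (x z : Fin (2*l+1+1)) (hx : x.val < 2*l+1) (hz : z.val = 2*l+1) :
    Matrix.fromBlocks A B C D (finSumFinEquiv.symm x) (finSumFinEquiv.symm z)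
      = B ⟨x.val, hx⟩ 0 := by
  rw [fsf_symm_lt x hx, fsf_symm_last z hz]; rfl

lemma fb_rl (x z : Fin (2*l+1+1)) (hx : x.val = 2*l+1) (hz : z.val < 2*l+1) :
    Matrix.fromBlocks A B C D (finSumFinEquiv.symm x) (finSumFinEquiv.symm z)
      = C 0 ⟨z.val, hz⟩ := by
  rw [fsf_symm_last x hx, fsf_symm_lt z hz]; rfl

lemma fb_rr (x z : Fin (2*l+1+1)) (hx : x.val = 2*l+1) (hz : z.val = 2*l+1) :
    Matrix.fromBlocks A B C D (finSumFinEquiv.symm x) (finSumFinEquiv.symm z)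
      = D 0 0 := by
  rw [fsf_symm_last x hx, fsf_symm_last z hz]; rfl

end FB

lemma Yblock_ll (l : ℕ) (y) (w) (a b : Fin (2*(l+1))) (ha : a.val < 2*l+1)
    (hb : b.val < 2*l+1) : Yblock l y w a b = y ⟨a.val, ha⟩ ⟨b.val, hb⟩ := by
  rw [Yblock_apply]; exact fb_ll y (-(wᵀ)) w 0 _ _ ha hb

lemma Yblock_lr (l : ℕ) (y) (w) (a b : Fin (2*(l+1))) (ha : a.val < 2*l+1)
    (hb : b.val = 2*l+1) : Yblock l y w a b = -(w 0 ⟨a.val, ha⟩) := by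
  rw [Yblock_apply]; exact fb_lr y (-(wᵀ)) w 0 _ _ ha hb

lemma Yblock_rl (l : ℕ) (y) (w) (a b : Fin (2*(l+1))) (ha : a.val = 2*l+1)
    (hb : b.val < 2*l+1) : Yblock l y w a b = w 0 ⟨b.val, hb⟩ := by
  rw [Yblock_apply]; exact fb_rl y (-(wᵀ)) w 0 _ _ ha hb

lemma Yblock_rr (l : ℕ) (y) (w) (a b : Fin (2*(l+1))) (ha : a.val = 2*l+1)
    (hb : b.val = 2*l+1) : Yblock l y w a b = 0 := by
  rw [Yblock_apply]; exact fb_rr y (-(wᵀ)) w 0 _ _ ha hb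

lemma term_structure (l : ℕ) (y : Matrix (Fin (2 * l + 1)) (Fin (2 * l + 1)) ℂ)
    (σ : Equiv.Perm (Fin (2*(l+1)))) :
    ∃ (c : ℂ) (k : Fin (2*l+1)), ∀ w : Matrix (Fin 1) (Fin (2 * l + 1)) ℂ,
      ∏ i : Fin (l+1), Yblock l y w (σ (pe (l+1) i)) (σ (qe (l+1) i)) = c * w 0 k := by
  set L : Fin (2*(l+1)) := ⟨2*l+1, by omega⟩ with hL
  set x0 := σ.symm L with hx0def
  have hx0 : σ x0 = L := Equiv.apply_symm_apply σ L
  have key : ∀ x : Fin (2*(l+1)), x ≠ x0 → (σ x).val < 2*l+1 := by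
    intro x hx
    have hne : σ x ≠ L := fun h => hx (by
      apply σ.injective; rw [h, hx0])
    have hlt := (σ x).2
    have hval : (σ x).val ≠ 2*l+1 := fun h => hne (Fin.ext h)
    omega
  by_cases hpar : x0.val % 2 = 0
  · -- even case
    have hx2 := x0.2
    set j0 : Fin (l+1) := ⟨x0.val / 2, by omega⟩ with hj0
    have hpe : pe (l+1) j0 = x0 := Fin.ext (by simp [pe, hj0]; omega)
    have hqne : qe (l+1) j0 ≠ x0 := fun h => by
      have := congrArg Fin.val h; simp [qe, hj0] at this; omega
    have hqlt : (σ (qe (l+1) j0)).val < 2*l+1 := key _ hqne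
    refine ⟨∏ i ∈ Finset.univ.erase j0,
      Yblock l y 0 (σ (pe (l+1) i)) (σ (qe (l+1) i)),
      ⟨(σ (qe (l+1) j0)).val, hqlt⟩, fun w => ?_⟩
    rw [← Finset.mul_prod_erase Finset.univ _ (Finset.mem_univ j0)]
    have h1 : Yblock l y w (σ (pe (l+1) j0)) (σ (qe (l+1) j0))
        = w 0 ⟨(σ (qe (l+1) j0)).val, hqlt⟩ := by
      rw [hpe, hx0]; exact Yblock_rl l y w _ _ rfl hqlt
    rw [h1, mul_comm]
    congr 1
    refine Finset.prod_congr rfl fun i hi => ?_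
    have hine : i ≠ j0 := Finset.ne_of_mem_erase hi
    have hplt : (σ (pe (l+1) i)).val < 2*l+1 := by
      refine key _ fun h => hine ?_
      have h2 : 2*(i:ℕ) = x0.val := congrArg Fin.val h
      exact Fin.ext (show (i:ℕ) = x0.val/2 by omega)
    have hqlt' : (σ (qe (l+1) i)).val < 2*l+1 := by
      refine key _ fun h => ?_
      have h2 : 2*(i:ℕ)+1 = x0.val := congrArg Fin.val h
      omega
    rw [Yblock_ll l y w _ _ hplt hqlt', Yblock_ll l y 0 _ _ hplt hqlt']
  · -- odd case
    have hx2 := x0.2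
    set j0 : Fin (l+1) := ⟨x0.val / 2, by omega⟩ with hj0
    have hqe : qe (l+1) j0 = x0 := Fin.ext (by simp [qe, hj0]; omega)
    have hpne : pe (l+1) j0 ≠ x0 := fun h => by
      have := congrArg Fin.val h; simp [pe, hj0] at this; omega
    have hplt0 : (σ (pe (l+1) j0)).val < 2*l+1 := key _ hpne
    refine ⟨-∏ i ∈ Finset.univ.erase j0,
      Yblock l y 0 (σ (pe (l+1) i)) (σ (qe (l+1) i)),
      ⟨(σ (pe (l+1) j0)).val, hplt0⟩, fun w => ?_⟩
    rw [← Finset.mul_prod_erase Finset.univ _ (Finset.mem_univ j0)]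
    have h1 : Yblock l y w (σ (pe (l+1) j0)) (σ (qe (l+1) j0))
        = -(w 0 ⟨(σ (pe (l+1) j0)).val, hplt0⟩) := by
      rw [hqe, hx0]; exact Yblock_lr l y w _ _ hplt0 rfl
    rw [h1]
    have h2 : ∏ i ∈ Finset.univ.erase j0,
        Yblock l y w (σ (pe (l+1) i)) (σ (qe (l+1) i))
        = ∏ i ∈ Finset.univ.erase j0,
        Yblock l y 0 (σ (pe (l+1) i)) (σ (qe (l+1) i)) := by
      refine Finset.prod_congr rfl fun i hi => ?_
      have hine : i ≠ j0 := Finset.ne_of_mem_erase hi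
      have hplt : (σ (pe (l+1) i)).val < 2*l+1 := by
        refine key _ fun h => ?_
        have h2 : 2*(i:ℕ) = x0.val := congrArg Fin.val h
        omega
      have hqlt' : (σ (qe (l+1) i)).val < 2*l+1 := by
        refine key _ fun h => hine ?_
        have h2 : 2*(i:ℕ)+1 = x0.val := congrArg Fin.val h
        exact Fin.ext (show (i:ℕ) = x0.val/2 by omega)
      rw [Yblock_ll l y w _ _ hplt hqlt', Yblock_ll l y 0 _ _ hplt hqlt']
    rw [h2]
    ring

noncomputable def dl (l : ℕ) (k : Fin (2*l+1)) : Matrix (Fin 1) (Fin (2*l+1)) ℂ :=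
  fun _ j => if j = k then 1 else 0

lemma pf_sum_linear (l : ℕ) (y : Matrix (Fin (2 * l + 1)) (Fin (2 * l + 1)) ℂ)
    (w : Matrix (Fin 1) (Fin (2 * l + 1)) ℂ) :
    ∑ σ : Equiv.Perm (Fin (2*(l+1))), ((Equiv.Perm.sign σ : ℤ) : ℂ) *
      ∏ i : Fin (l+1), Yblock l y w (σ (pe (l+1) i)) (σ (qe (l+1) i))
    = ∑ k : Fin (2*l+1), w 0 k *
        ∑ σ : Equiv.Perm (Fin (2*(l+1))), ((Equiv.Perm.sign σ : ℤ) : ℂ) *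
          ∏ i : Fin (l+1), Yblock l y (dl l k) (σ (pe (l+1) i)) (σ (qe (l+1) i)) := by
  choose c k hck using fun σ => term_structure l y σ
  have hdl : ∀ (k' : Fin (2*l+1)) σ, (dl l k') 0 (k σ) = if k σ = k' then (1:ℂ) else 0 := by
    intro k' σ; rfl
  calc ∑ σ : Equiv.Perm (Fin (2*(l+1))), ((Equiv.Perm.sign σ : ℤ) : ℂ) *
      ∏ i : Fin (l+1), Yblock l y w (σ (pe (l+1) i)) (σ (qe (l+1) i))
      = ∑ σ : Equiv.Perm (Fin (2*(l+1))), ((Equiv.Perm.sign σ : ℤ) : ℂ) *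
        (c σ * w 0 (k σ)) := by
        refine Finset.sum_congr rfl fun σ _ => ?_; rw [hck σ w]
    _ = ∑ σ : Equiv.Perm (Fin (2*(l+1))), ∑ k' : Fin (2*l+1),
        w 0 k' * (((Equiv.Perm.sign σ : ℤ) : ℂ) *
          (c σ * if k σ = k' then (1:ℂ) else 0)) := by
        refine Finset.sum_congr rfl fun σ _ => Eq.symm ?_
        rw [Finset.sum_eq_single (k σ)]
        · rw [if_pos rfl]; ring
        · intro b _ hb
          rw [if_neg fun h => hb h.symm]; ring
        · intro h; exact absurd (Finset.mem_univ _) h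
    _ = ∑ k' : Fin (2*l+1), w 0 k' *
        ∑ σ : Equiv.Perm (Fin (2*(l+1))), ((Equiv.Perm.sign σ : ℤ) : ℂ) *
          ∏ i : Fin (l+1), Yblock l y (dl l k') (σ (pe (l+1) i)) (σ (qe (l+1) i)) := by
        rw [Finset.sum_comm]
        refine Finset.sum_congr rfl fun k' _ => ?_
        rw [Finset.mul_sum]
        refine Finset.sum_congr rfl fun σ _ => ?_
        rw [hck σ (dl l k'), hdl k' σ]

lemma pf_linear (l : ℕ) (y : Matrix (Fin (2 * l + 1)) (Fin (2 * l + 1)) ℂ)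
    (w : Matrix (Fin 1) (Fin (2 * l + 1)) ℂ) :
    pfaffian (l+1) (Yblock l y w)
      = ∑ k : Fin (2*l+1), w 0 k * pfaffian (l+1) (Yblock l y (dl l k)) := by
  unfold pfaffian
  have h := pf_sum_linear l y w
  unfold pe qe at h
  rw [h, Finset.mul_sum]
  refine Finset.sum_congr rfl fun k _ => by ring

noncomputable def dlP (l : ℕ) (k : Fin (2*l+1)) :
    Matrix (Fin 1) (Fin (2*l+1)) (MvPolynomial (Fin (2*l+1) × Fin (2*l+1)) ℂ) :=
  fun _ j => if j = k then 1 else 0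

noncomputable def YP (l : ℕ) (k : Fin (2*l+1)) :
    Matrix (Fin (2*(l+1))) (Fin (2*(l+1))) (MvPolynomial (Fin (2*l+1) × Fin (2*l+1)) ℂ) :=
  Matrix.reindex (finSumFinEquiv.trans (finCongr (by omega)))
    (finSumFinEquiv.trans (finCongr (by omega)))
    (Matrix.fromBlocks (fun a b => MvPolynomial.X (a, b)) (-((dlP l k)ᵀ)) (dlP l k) 0)

lemma YP_apply (l : ℕ) (k : Fin (2*l+1)) (a b : Fin (2*(l+1))) :
    YP l k a b = Matrix.fromBlocks (fun a b => MvPolynomial.X (a, b)) (-((dlP l k)ᵀ))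
      (dlP l k) 0
      (finSumFinEquiv.symm (Fin.cast (by omega) a))
      (finSumFinEquiv.symm (Fin.cast (by omega) b)) := rfl

lemma YP_ll (l : ℕ) (k : Fin (2*l+1)) (a b : Fin (2*(l+1))) (ha : a.val < 2*l+1)
    (hb : b.val < 2*l+1) : YP l k a b = MvPolynomial.X (⟨a.val, ha⟩, ⟨b.val, hb⟩) := by
  rw [YP_apply]; exact fb_ll _ (-((dlP l k)ᵀ)) (dlP l k) 0 _ _ ha hb

lemma YP_lr (l : ℕ) (k : Fin (2*l+1)) (a b : Fin (2*(l+1))) (ha : a.val < 2*l+1)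
    (hb : b.val = 2*l+1) : YP l k a b = -(dlP l k 0 ⟨a.val, ha⟩) := by
  rw [YP_apply]; exact fb_lr _ (-((dlP l k)ᵀ)) (dlP l k) 0 _ _ ha hb

lemma YP_rl (l : ℕ) (k : Fin (2*l+1)) (a b : Fin (2*(l+1))) (ha : a.val = 2*l+1)
    (hb : b.val < 2*l+1) : YP l k a b = dlP l k 0 ⟨b.val, hb⟩ := by
  rw [YP_apply]; exact fb_rl _ (-((dlP l k)ᵀ)) (dlP l k) 0 _ _ ha hb

lemma YP_rr (l : ℕ) (k : Fin (2*l+1)) (a b : Fin (2*(l+1))) (ha : a.val = 2*l+1)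
    (hb : b.val = 2*l+1) : YP l k a b = 0 := by
  rw [YP_apply]; exact fb_rr _ (-((dlP l k)ᵀ)) (dlP l k) 0 _ _ ha hb

lemma eval_dlP (l : ℕ) (k j : Fin (2*l+1))
    (y : Matrix (Fin (2 * l + 1)) (Fin (2 * l + 1)) ℂ) :
    MvPolynomial.eval (fun q : Fin (2*l+1) × Fin (2*l+1) => y q.1 q.2) (dlP l k 0 j)
      = dl l k 0 j := by
  unfold dlP dl
  split <;> simp

lemma eval_YP (l : ℕ) (k : Fin (2*l+1)) (y : Matrix (Fin (2 * l + 1)) (Fin (2 * l + 1)) ℂ)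
    (a b : Fin (2*(l+1))) :
    MvPolynomial.eval (fun q : Fin (2*l+1) × Fin (2*l+1) => y q.1 q.2) (YP l k a b)
      = Yblock l y (dl l k) a b := by
  have ha2 := a.2; have hb2 := b.2
  rcases lt_or_ge (a.val) (2*l+1) with ha | ha <;> rcases lt_or_ge (b.val) (2*l+1) with hb | hb
  · rw [Yblock_ll l y _ a b ha hb, YP_ll l k a b ha hb]; simp
  · have hb' : b.val = 2*l+1 := by omega
    rw [Yblock_lr l y _ a b ha hb', YP_lr l k a b ha hb', map_neg, eval_dlP]
  · have ha' : a.val = 2*l+1 := by omega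
    rw [Yblock_rl l y _ a b ha' hb, YP_rl l k a b ha' hb, eval_dlP]
  · have ha' : a.val = 2*l+1 := by omega
    have hb' : b.val = 2*l+1 := by omega
    rw [Yblock_rr l y _ a b ha' hb', YP_rr l k a b ha' hb']; simp

noncomputable def Pv (l : ℕ) (k : Fin (2*l+1)) :
    MvPolynomial (Fin (2*l+1) × Fin (2*l+1)) ℂ :=
  MvPolynomial.C (1 / ((2:ℂ)^(l+1) * ((l+1).factorial : ℂ))) *
    ∑ σ : Equiv.Perm (Fin (2*(l+1))), (Equiv.Perm.sign σ : ℤ) *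
      ∏ i : Fin (l+1), YP l k (σ (pe (l+1) i)) (σ (qe (l+1) i))

lemma eval_Pv (l : ℕ) (k : Fin (2*l+1)) (y : Matrix (Fin (2 * l + 1)) (Fin (2 * l + 1)) ℂ) :
    MvPolynomial.eval (fun q : Fin (2*l+1) × Fin (2*l+1) => y q.1 q.2) (Pv l k)
      = pfaffian (l+1) (Yblock l y (dl l k)) := by
  unfold Pv pfaffian
  rw [_root_.map_mul, MvPolynomial.eval_C, map_sum]
  congr 1
  refine Finset.sum_congr rfl fun σ _ => ?_
  rw [_root_.map_mul, map_prod, map_intCast]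
  congr 1
  exact Finset.prod_congr rfl fun i _ => eval_YP l k y _ _

lemma Yblock_conj (l : ℕ) (y g : Matrix (Fin (2 * l + 1)) (Fin (2 * l + 1)) ℂ)
    (hg : gᵀ * g = 1) (w : Matrix (Fin 1) (Fin (2 * l + 1)) ℂ) :
    Yblock l (g * y * g⁻¹) w
      = (Matrix.reindex (finSumFinEquiv.trans (finCongr (by omega)))
          (finSumFinEquiv.trans (finCongr (by omega)))
          (Matrix.fromBlocks g 0 0 (1 : Matrix (Fin 1) (Fin 1) ℂ)))
        * Yblock l y (w * g)
        * (Matrix.reindex (finSumFinEquiv.trans (finCongr (by omega)))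
          (finSumFinEquiv.trans (finCongr (by omega)))
          (Matrix.fromBlocks g 0 0 (1 : Matrix (Fin 1) (Fin 1) ℂ)))ᵀ := by
  have hinv : g⁻¹ = gᵀ := Matrix.inv_eq_left_inv hg
  have hgg : g * gᵀ = 1 := mul_eq_one_comm.mp hg
  have h1 : g * (gᵀ * wᵀ) = wᵀ := by rw [← Matrix.mul_assoc, hgg, Matrix.one_mul]
  have h2 : w * (g * gᵀ) = w := by rw [hgg, Matrix.mul_one]
  unfold Yblock
  simp only [Matrix.reindex_apply, Matrix.transpose_submatrix,
    Matrix.submatrix_mul_equiv, Matrix.fromBlocks_transpose,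
    Matrix.fromBlocks_multiply, hinv]
  simp [Matrix.mul_assoc, h1, h2]

lemma detG (l : ℕ) (g : Matrix (Fin (2*l+1)) (Fin (2*l+1)) ℂ) :
    ((Matrix.reindex (finSumFinEquiv.trans (finCongr (by omega)))
      (finSumFinEquiv.trans (finCongr (by omega)))
      (Matrix.fromBlocks g 0 0 (1 : Matrix (Fin 1) (Fin 1) ℂ)))
      : Matrix (Fin (2*(l+1))) (Fin (2*(l+1))) ℂ).det = g.det := by
  rw [Matrix.reindex_apply, Matrix.det_submatrix_equiv_self,
    Matrix.det_fromBlocks_zero₂₁, Matrix.det_one, mul_one]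

/-- For odd `n = 2ℓ+1` there is a polynomial covariant `pf : so(n) → ℂⁿ`, the
vector pfaffian, with `w* · pf(y) = Pf [[y, -ᵗw*], [w*, 0]]` and
`pf(g y g⁻¹) = (det g) g · pf(y)` for orthogonal `g`. -/
theorem stmt17 (l : ℕ) :
    ∃ pf : Matrix (Fin (2 * l + 1)) (Fin (2 * l + 1)) ℂ →
        Matrix (Fin (2 * l + 1)) (Fin 1) ℂ,
      (∃ P : Fin (2 * l + 1) →
          MvPolynomial (Fin (2 * l + 1) × Fin (2 * l + 1)) ℂ,
        ∀ y i, pf y i 0 = MvPolynomial.eval (fun q => y q.1 q.2) (P i)) ∧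
      (∀ (y : Matrix (Fin (2 * l + 1)) (Fin (2 * l + 1)) ℂ)
          (wstar : Matrix (Fin 1) (Fin (2 * l + 1)) ℂ), yᵀ = -y →
        (wstar * pf y) 0 0 = pfaffian (l + 1) (Yblock l y wstar)) ∧
      (∀ (y g : Matrix (Fin (2 * l + 1)) (Fin (2 * l + 1)) ℂ), yᵀ = -y →
        gᵀ * g = 1 → pf (g * y * g⁻¹) = g.det • (g * pf y)) := by
  refine ⟨fun y => fun i _ => pfaffian (l+1) (Yblock l y (dl l i)),
    ⟨fun i => Pv l i, fun y i => (eval_Pv l i y).symm⟩,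
    fun y wstar _ => ?_, fun y g _ hg => ?_⟩
  · simp only [Matrix.mul_apply]
    exact (pf_linear l y wstar).symm
  · funext i j
    have hj : j = 0 := Subsingleton.elim j 0
    subst hj
    show pfaffian (l+1) (Yblock l (g*y*g⁻¹) (dl l i)) = _
    rw [Yblock_conj l y g hg (dl l i), pf_conj (l+1) _ _, detG, pf_linear]
    simp only [Matrix.smul_apply, Matrix.mul_apply, smul_eq_mul]
    congr 1
    refine Finset.sum_congr rfl fun k2 _ => ?_
    have hdg : (∑ j : Fin (2*l+1), dl l i 0 j * g j k2) = g i k2 := by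
      unfold dl; simp
    rw [hdg]
end
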